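/- Let M = M₁ *_B M₂ be an amalgamated free product of tracial von Neumann algebras over B, with M₁ diffuse, and suppose there exist unitaries u₁ ∈ M₁ and u₂ ∈ M₂ with E_B(u₁) = E_B(u₂) = 0. Then for all x, y in the dense span of reduced words, E_{M₁}(x (u₁u₂)^n y) = 0 for all sufficiently large n. Consequently, the unitary u₁u₂ is not unitarily conjugate in M to any unitary of M₁, and M contains two Haar unitaries that are not unitarily conjugate. -/

import Mathlib

namespace Stmt17

variable {M : Type*} [Ring M] [Algebra ℂ M] [StarRing M] [StarModule ℂ M]

/-- Reduced alternating words: `RW Msub EB i j ℓ w` means `w` is a product of `ℓ` letters,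
each in `Msub` of alternating indices with `EB`-value zero, first index `i`, last index `j`. -/
inductive RW (Msub : Fin 2 → StarSubalgebra ℂ M) (EB : M →ₗ[ℂ] M) :
    Fin 2 → Fin 2 → ℕ → M → Prop
  | single {i : Fin 2} {x : M} (hx : x ∈ Msub i) (hx0 : EB x = 0) : RW Msub EB i i 1 x
  | cons {i i' j : Fin 2} {ℓ : ℕ} {x w : M} (hx : x ∈ Msub i) (hx0 : EB x = 0)
      (hij : i ≠ i') (hw : RW Msub EB i' j ℓ w) : RW Msub EB i j (ℓ + 1) (x * w)

variable {Msub : Fin 2 → StarSubalgebra ℂ M} {EB : M →ₗ[ℂ] M} {B : StarSubalgebra ℂ M}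

lemma fin2cases (i : Fin 2) : i = 0 ∨ i = 1 := by
  rcases i with ⟨_ | n, h⟩
  · exact Or.inl rfl
  · refine Or.inr ?_
    have : n = 0 := by omega
    subst this
    rfl

lemma RW.one_le {i j : Fin 2} {ℓ : ℕ} {w : M} (h : RW Msub EB i j ℓ w) : 1 ≤ ℓ := by
  cases h <;> omega

lemma RW.snoc {i j : Fin 2} {ℓ : ℕ} {w : M} (h : RW Msub EB i j ℓ w) :
    ∀ {j' : Fin 2} {s : M}, s ∈ Msub j' → EB s = 0 → j ≠ j' →
      RW Msub EB i j' (ℓ + 1) (w * s) := by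
  induction h with
  | single hx hx0 => exact fun hs hs0 hjj => .cons hx hx0 hjj (.single hs hs0)
  | cons hx hx0 hij hw ih =>
    intro j' s hs hs0 hjj
    rw [mul_assoc]
    exact .cons hx hx0 hij (ih hs hs0 hjj)

lemma RW.bmul (hBM : ∀ i, B ≤ Msub i)
    (hEBl : ∀ b ∈ B, ∀ x : M, EB (b * x) = b * EB x)
    {b : M} (hb : b ∈ B) {i j : Fin 2} {ℓ : ℕ} {w : M} (h : RW Msub EB i j ℓ w) :
    RW Msub EB i j ℓ (b * w) := by
  cases h with
  | single hx hx0 =>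
    exact .single (mul_mem (hBM _ hb) hx) (by rw [hEBl b hb, hx0, mul_zero])
  | cons hx hx0 hij hw =>
    rw [← mul_assoc]
    exact .cons (mul_mem (hBM _ hb) hx) (by rw [hEBl b hb, hx0, mul_zero]) hij hw

lemma RW.mulb (hBM : ∀ i, B ≤ Msub i)
    (hEBr : ∀ x : M, ∀ b ∈ B, EB (x * b) = EB x * b)
    {i j : Fin 2} {ℓ : ℕ} {w : M} (h : RW Msub EB i j ℓ w) :
    ∀ {b : M}, b ∈ B → RW Msub EB i j ℓ (w * b) := by
  induction h with
  | single hx hx0 =>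
    exact fun hb => .single (mul_mem hx (hBM _ hb)) (by rw [hEBr _ _ hb, hx0, zero_mul])
  | cons hx hx0 hij hw ih =>
    intro b hb
    rw [mul_assoc]
    exact .cons hx hx0 hij (ih hb)

lemma RW.star_rw (hEBstar : ∀ x : M, EB (star x) = star (EB x))
    {i j : Fin 2} {ℓ : ℕ} {w : M} (h : RW Msub EB i j ℓ w) :
    RW Msub EB j i ℓ (star w) := by
  induction h with
  | single hx hx0 => exact .single (star_mem hx) (by rw [hEBstar, hx0, star_zero])
  | cons hx hx0 hij hw ih =>
    rw [star_mul]
    exact ih.snoc (star_mem hx) (by rw [hEBstar, hx0, star_zero]) (Ne.symm hij)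

/-- Conversion to the `Fin`-tuple representation. -/
lemma RW.exists_rep {i j : Fin 2} {ℓ : ℕ} {w : M} (h : RW Msub EB i j ℓ w) :
    ∃ (k : ℕ) (x : Fin (k + 1) → M) (idx : Fin (k + 1) → Fin 2),
      (∀ t, x t ∈ Msub (idx t)) ∧ (∀ t, EB (x t) = 0) ∧
      (∀ t : Fin k, idx t.castSucc ≠ idx t.succ) ∧ w = (List.ofFn x).prod ∧
      idx 0 = i ∧ ℓ = k + 1 := by
  induction h with
  | @single i x hx hx0 =>
    refine ⟨0, fun _ => x, fun _ => i, fun t => hx, fun t => hx0, fun t => t.elim0, ?_, rfl, rfl⟩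
    simp
  | @cons i i' j ℓ x w hx hx0 hij hw ih =>
    obtain ⟨k, xs, idx, h1, h2, h3, h4, h5, h6⟩ := ih
    refine ⟨k + 1, Fin.cons x xs, Fin.cons i idx, ?_, ?_, ?_, ?_, by simp, by omega⟩
    · intro t
      refine Fin.cases ?_ ?_ t <;> simp [hx, h1]
    · intro t
      refine Fin.cases ?_ ?_ t <;> simp [hx0, h2]
    · intro t
      refine Fin.cases ?_ ?_ t
      · simpa [h5] using hij
      · intro m
        have := h3 m
        simpa [← Fin.succ_castSucc] using this
    · rw [h4, List.ofFn_succ]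
      simp [List.prod_cons]

/-- Conversion from the `Fin`-tuple representation. -/
lemma rw_of_rep : ∀ (k : ℕ) (x : Fin (k + 1) → M) (idx : Fin (k + 1) → Fin 2),
    (∀ t, x t ∈ Msub (idx t)) → (∀ t, EB (x t) = 0) →
    (∀ t : Fin k, idx t.castSucc ≠ idx t.succ) →
    ∃ j, RW Msub EB (idx 0) j (k + 1) (List.ofFn x).prod := by
  intro k
  induction k with
  | zero =>
    intro x idx h1 h2 h3
    refine ⟨idx 0, ?_⟩
    have : (List.ofFn x).prod = x 0 := by simp
    rw [this]
    exact .single (h1 0) (h2 0)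
  | succ k ih =>
    intro x idx h1 h2 h3
    obtain ⟨j, hj⟩ := ih (fun t => x t.succ) (fun t => idx t.succ)
      (fun t => h1 t.succ) (fun t => h2 t.succ)
      (fun t => by simpa [← Fin.succ_castSucc] using h3 t.succ)
    refine ⟨j, ?_⟩
    have hprod : (List.ofFn x).prod = x 0 * (List.ofFn fun t : Fin (k+1) => x t.succ).prod := by
      rw [List.ofFn_succ]; simp [List.prod_cons]
    rw [hprod]
    exact .cons (h1 0) (h2 0) (by simpa using h3 0) hj



/-- Words of length at least `m` with first index `i`. -/
def WF (Msub : Fin 2 → StarSubalgebra ℂ M) (EB : M →ₗ[ℂ] M) (i : Fin 2) (m : ℕ) : Set M :=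
  {w | ∃ j ℓ, m ≤ ℓ ∧ RW Msub EB i j ℓ w}

/-- Words of length at least `m`. -/
def WGE (Msub : Fin 2 → StarSubalgebra ℂ M) (EB : M →ₗ[ℂ] M) (m : ℕ) : Set M :=
  {w | ∃ i j ℓ, m ≤ ℓ ∧ RW Msub EB i j ℓ w}

lemma WF_mono {i : Fin 2} {m m' : ℕ} (h : m' ≤ m) : WF Msub EB i m ⊆ WF Msub EB i m' :=
  fun w ⟨j, ℓ, hl, hw⟩ => ⟨j, ℓ, le_trans h hl, hw⟩

lemma WF_subset_WGE {i : Fin 2} {m : ℕ} : WF Msub EB i m ⊆ WGE Msub EB m :=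
  fun w ⟨j, ℓ, hl, hw⟩ => ⟨i, j, ℓ, hl, hw⟩

section Mul

variable (hBM : ∀ i, B ≤ Msub i)
  (hEBl : ∀ b ∈ B, ∀ x : M, EB (b * x) = b * EB x)
  (hEBr : ∀ x : M, ∀ b ∈ B, EB (x * b) = EB x * b)
  (hEBran : ∀ x : M, EB x ∈ B) (hEBfix : ∀ b ∈ B, EB b = b)

include hBM hEBl hEBr hEBran hEBfix

lemma RW.mul_letter {i j : Fin 2} {ℓ : ℕ} {w : M} (h : RW Msub EB i j ℓ w) :
    ∀ {j' : Fin 2} {s : M}, 2 ≤ ℓ → s ∈ Msub j' → EB s = 0 →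
      w * s ∈ Submodule.span ℂ (WF Msub EB i (ℓ - 1)) := by
  induction h with
  | single hx hx0 => intro j' s h2 _ _; omega
  | @cons i i' j ℓ' x w' hx hx0 hij hw ih =>
    intro j' s h2 hs hs0
    by_cases hl : 2 ≤ ℓ'
    · have h1 : w' * s ∈ Submodule.span ℂ (WF Msub EB i' (ℓ' - 1)) := ih hl hs hs0
      rw [mul_assoc]
      have hmap : ∀ z ∈ Submodule.span ℂ (WF Msub EB i' (ℓ' - 1)),
          x * z ∈ Submodule.span ℂ (WF Msub EB i (ℓ' + 1 - 1)) := by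
        intro z hz
        refine Submodule.span_induction ?_ ?_ ?_ ?_ hz
        · rintro z ⟨j₂, m, hm, hzw⟩
          exact Submodule.subset_span ⟨j₂, m + 1, by omega, .cons hx hx0 hij hzw⟩
        · simp
        · intro a b _ _ ha hb
          rw [mul_add]; exact Submodule.add_mem _ ha hb
        · intro r z _ hz
          rw [mul_smul_comm]; exact Submodule.smul_mem _ _ hz
      exact hmap _ h1
    · cases hw with
      | single hy hy0 =>
        by_cases hjj : i' = j'
        · set b := EB (w' * s) with hbdef
          have hbB : b ∈ B := hEBran (w' * s)
          have hys : w' * s ∈ Msub i' := mul_mem hy (hjj ▸ hs)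
          have hc : w' * s - b ∈ Msub i' := sub_mem hys (hBM i' hbB)
          have hc0 : EB (w' * s - b) = 0 := by
            rw [map_sub, hEBfix _ hbB]; exact sub_self _
          have hsplit : x * w' * s = x * b + x * (w' * s - b) := by
            rw [mul_assoc, ← mul_add]
            congr 1
            abel
          rw [hsplit]
          refine Submodule.add_mem _ (Submodule.subset_span ?_) (Submodule.subset_span ?_)
          · exact ⟨i, 1, by omega,
              .single (mul_mem hx (hBM _ hbB)) (by rw [hEBr _ _ hbB, hx0, zero_mul])⟩
          · exact ⟨i', 2, by omega, .cons hx hx0 hij (.single hc hc0)⟩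
        · rw [mul_assoc]
          exact Submodule.subset_span
            ⟨j', 3, by omega, .cons hx hx0 hij (.cons hy hy0 hjj (.single hs hs0))⟩
      | cons _ _ _ hw' => exact absurd hw'.one_le (by omega)

lemma RW.mul_word {p q : Fin 2} {c : ℕ} {h : M} (hh : RW Msub EB p q c h) :
    ∀ {i j : Fin 2} {ℓ : ℕ} {w : M}, RW Msub EB i j ℓ w → c + 2 ≤ ℓ →
      w * h ∈ Submodule.span ℂ (WF Msub EB i (ℓ - c)) := by
  induction hh with
  | single hs hs0 =>
    intro i j ℓ w hw hc
    exact hw.mul_letter hBM hEBl hEBr hEBran hEBfix (by omega) hs hs0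
  | @cons p p' q c' s h' hs hs0 hpq hh' ih =>
    intro i j ℓ w hw hc
    rw [← mul_assoc]
    have h1 : w * s ∈ Submodule.span ℂ (WF Msub EB i (ℓ - 1)) :=
      hw.mul_letter hBM hEBl hEBr hEBran hEBfix (by omega) hs hs0
    refine Submodule.span_induction (p := fun z _ =>
      z * h' ∈ Submodule.span ℂ (WF Msub EB i (ℓ - (c' + 1)))) ?_ ?_ ?_ ?_ h1
    · rintro z ⟨j₂, m, hm, hz⟩
      have hz' := ih hz (by omega)
      exact Submodule.span_mono (WF_mono (by omega)) hz'
    · simp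
    · intro a b _ _ ha hb
      rw [add_mul]; exact Submodule.add_mem _ ha hb
    · intro r z _ hz
      rw [smul_mul_assoc]; exact Submodule.smul_mem _ _ hz

end Mul


section Analysis


open ComplexConjugate

variable (τ : M →ₗ[ℂ] ℂ)

lemma herm (hτpos : ∀ x : M, 0 ≤ (τ (star x * x)).re ∧ (τ (star x * x)).im = 0)
    (x y : M) : τ (star y * x) = conj (τ (star x * y)) := by
  have him : ∀ z : M, (τ (star z * z)).im = 0 := fun z => (hτpos z).2
  have h1 : (τ (star x * y)).im + (τ (star y * x)).im = 0 := by
    have e : star (x + y) * (x + y)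
        = (star x * x + star y * y) + (star x * y + star y * x) := by
      rw [star_add]; noncomm_ring
    have e1 := him (x + y)
    rw [e] at e1
    simp only [map_add, Complex.add_im] at e1
    have hx := him x; have hy := him y
    linarith
  have h2 : (τ (star x * y)).re - (τ (star y * x)).re = 0 := by
    have e : star (x + Complex.I • y) * (x + Complex.I • y)
        = (star x * x + star y * y) + (Complex.I • (star x * y) - Complex.I • (star y * x)) := by
      rw [star_add, star_smul]
      simp only [Complex.star_def, Complex.conj_I, neg_smul, add_mul, mul_add, neg_mul,
        smul_add, smul_mul_assoc, mul_smul_comm, smul_smul, Complex.I_mul_I, neg_neg,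
        one_smul, neg_one_smul]
      match_scalars <;> simp [Complex.I_sq] <;> ring
    have e1 := him (x + Complex.I • y)
    rw [e] at e1
    simp only [map_add, map_sub, map_smul, smul_eq_mul, Complex.add_im, Complex.sub_im,
      Complex.mul_im, Complex.I_re, Complex.I_im] at e1
    have hx := him x; have hy := him y
    linarith
  apply Complex.ext
  · simpa [Complex.conj_re] using (by linarith : (τ (star y * x)).re = (τ (star x * y)).re)
  · simpa [Complex.conj_im] using (by linarith : (τ (star y * x)).im = -(τ (star x * y)).im)

lemma tau_star (hτpos : ∀ x : M, 0 ≤ (τ (star x * x)).re ∧ (τ (star x * x)).im = 0)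
    (m : M) : τ (star m) = conj (τ m) := by
  have h := herm τ hτpos m 1
  simp only [star_one, one_mul, mul_one] at h
  simpa using (congrArg conj h).symm

/-- The tracial 2-seminorm. -/
noncomputable def Nrm (z : M) : ℝ := Real.sqrt (τ (star z * z)).re

lemma Nrm_nonneg (z : M) : 0 ≤ Nrm τ z := Real.sqrt_nonneg _

section Pos

variable (hτpos : ∀ x : M, 0 ≤ (τ (star x * x)).re ∧ (τ (star x * x)).im = 0)
include hτpos

lemma Nrm_sq (z : M) : Nrm τ z ^ 2 = (τ (star z * z)).re := Real.sq_sqrt (hτpos z).1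

lemma cs (x y : M) : ‖τ (star x * y)‖ ≤ Nrm τ x * Nrm τ y := by
  letI core : PreInnerProductSpace.Core ℂ M :=
    { inner := fun a b => τ (star a * b)
      conj_inner_symm := fun a b => by
        show conj (τ (star b * a)) = τ (star a * b)
        rw [herm τ hτpos a b, Complex.conj_conj]
      re_inner_nonneg := fun a => by
        show 0 ≤ RCLike.re (τ (star a * a))
        simpa using (hτpos a).1
      add_left := fun a b c => by
        show τ (star (a + b) * c) = τ (star a * c) + τ (star b * c)
        rw [star_add, add_mul, map_add]
      smul_left := fun a b r => by
        show τ (star (r • a) * b) = conj r * τ (star a * b)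
        rw [star_smul, smul_mul_assoc, map_smul, smul_eq_mul]
        rfl }
  letI : Inner ℂ M := InnerProductSpace.Core.toPreInner'
  have h := InnerProductSpace.Core.inner_mul_inner_self_le (𝕜 := ℂ) (F := M) x y
  have hxy : (inner ℂ x y : ℂ) = τ (star x * y) := rfl
  have hyx : (inner ℂ y x : ℂ) = τ (star y * x) := rfl
  have hxx : RCLike.re (inner ℂ x x : ℂ) = (τ (star x * x)).re := rfl
  have hyy : RCLike.re (inner ℂ y y : ℂ) = (τ (star y * y)).re := rfl
  rw [hxy, hyx, hxx, hyy] at h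
  have hnc : ‖τ (star y * x)‖ = ‖τ (star x * y)‖ := by
    rw [herm τ hτpos x y]
    exact RCLike.norm_conj _
  rw [hnc] at h
  have h1 : ‖τ (star x * y)‖ ^ 2 ≤ (Nrm τ x * Nrm τ y) ^ 2 := by
    rw [mul_pow, Nrm_sq τ hτpos, Nrm_sq τ hτpos]
    calc ‖τ (star x * y)‖ ^ 2 = ‖τ (star x * y)‖ * ‖τ (star x * y)‖ := sq (‖τ (star x * y)‖)
      _ ≤ _ := h
  calc ‖τ (star x * y)‖ = Real.sqrt (‖τ (star x * y)‖ ^ 2) :=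
        (Real.sqrt_sq (norm_nonneg _)).symm
    _ ≤ Real.sqrt ((Nrm τ x * Nrm τ y) ^ 2) := Real.sqrt_le_sqrt h1
    _ = Nrm τ x * Nrm τ y := Real.sqrt_sq (mul_nonneg (Nrm_nonneg τ x) (Nrm_nonneg τ y))

lemma Nrm_add (x y : M) : Nrm τ (x + y) ≤ Nrm τ x + Nrm τ y := by
  have e : star (x + y) * (x + y)
      = (star x * x + star y * y) + (star x * y + star y * x) := by
    rw [star_add]; noncomm_ring
  have expand : (τ (star (x + y) * (x + y))).re
      = (τ (star x * x)).re + (τ (star y * y)).re + 2 * (τ (star x * y)).re := by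
    rw [e]
    simp only [map_add, Complex.add_re]
    rw [herm τ hτpos x y, Complex.conj_re]
    ring
  have hre : (τ (star x * y)).re ≤ ‖τ (star x * y)‖ := by
    exact Complex.re_le_norm _
  have hcs := cs τ hτpos x y
  have hb : (τ (star (x + y) * (x + y))).re ≤ (Nrm τ x + Nrm τ y) ^ 2 := by
    rw [expand]
    have nx := Nrm_sq τ hτpos x
    have ny := Nrm_sq τ hτpos y
    nlinarith [Nrm_nonneg τ x, Nrm_nonneg τ y]
  have := Real.sqrt_le_sqrt hb
  rwa [Real.sqrt_sq (add_nonneg (Nrm_nonneg τ x) (Nrm_nonneg τ y))] at this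

end Pos


end Analysis

section Expectations

variable (τ : M →ₗ[ℂ] ℂ)

lemma EB_star
    (hτpos : ∀ x : M, 0 ≤ (τ (star x * x)).re ∧ (τ (star x * x)).im = 0)
    (hτfaith : ∀ x : M, τ (star x * x) = 0 → x = 0)
    (hEBran : ∀ x : M, EB x ∈ B)
    (hEBl : ∀ b ∈ B, ∀ x : M, EB (b * x) = b * EB x)
    (hEBr : ∀ x : M, ∀ b ∈ B, EB (x * b) = EB x * b)
    (hEBtr : ∀ x : M, τ (EB x) = τ x) (z : M) :
    EB (star z) = star (EB z) := by
  have key : ∀ b ∈ B, τ (star b * star z) = τ (star b * star (EB z)) := by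
    intro b hb
    rw [← star_mul z b, ← star_mul (EB z) b, tau_star τ hτpos, tau_star τ hτpos]
    congr 1
    rw [← hEBtr (z * b), hEBr z b hb]
  set d := EB (star z) - star (EB z) with hd
  have hdB : d ∈ B := sub_mem (hEBran _) (star_mem (hEBran z))
  have h3 : τ (star d * EB (star z)) = τ (star d * star z) := by
    rw [← hEBtr (star d * star z), hEBl (star d) (star_mem hdB) (star z)]
  have h4 : τ (star d * d) = 0 := by
    have e : star d * d = star d * EB (star z) - star d * star (EB z) := by
      rw [hd, mul_sub]
    rw [e, map_sub, h3, key d hdB, sub_self]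
  exact sub_eq_zero.mp (hτfaith d h4)

variable (hfree : ∀ (k : ℕ) (x : Fin (k + 1) → M) (idx : Fin (k + 1) → Fin 2),
      (∀ j, x j ∈ Msub (idx j)) → (∀ j, EB (x j) = 0) →
      (∀ j : Fin k, idx j.castSucc ≠ idx j.succ) →
      EB (List.ofFn x).prod = 0)

include hfree

lemma RW.eb_zero {i j : Fin 2} {ℓ : ℕ} {w : M} (h : RW Msub EB i j ℓ w) : EB w = 0 := by
  obtain ⟨k, x, idx, h1, h2, h3, h4, _, _⟩ := h.exists_rep
  rw [h4]; exact hfree k x idx h1 h2 h3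

variable (hBM : ∀ i, B ≤ Msub i)
  (hEBl : ∀ b ∈ B, ∀ x : M, EB (b * x) = b * EB x)
  (hEBran : ∀ x : M, EB x ∈ B) (hEBfix : ∀ b ∈ B, EB b = b)
  (hEBtr : ∀ x : M, τ (EB x) = τ x)

include hBM hEBl hEBran hEBfix hEBtr

lemma tau_mul_word {a : M} (ha : a ∈ Msub 0) {i j : Fin 2} {ℓ : ℕ} {w : M}
    (hw : RW Msub EB i j ℓ w) (hcond : 2 ≤ ℓ ∨ i = 1) : τ (a * w) = 0 := by
  have tauW : ∀ {i' j' : Fin 2} {ℓ' : ℕ} {w' : M}, RW Msub EB i' j' ℓ' w' → τ w' = 0 := by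
    intro i' j' ℓ' w' h
    rw [← hEBtr, h.eb_zero hfree, map_zero]
  have tauB : ∀ b ∈ B, ∀ {i' j' : Fin 2} {ℓ' : ℕ} {w' : M}, RW Msub EB i' j' ℓ' w' →
      τ (b * w') = 0 := by
    intro b hb i' j' ℓ' w' h
    exact tauW (h.bmul hBM hEBl hb)
  have split : ∀ m ∈ Msub 0, ∀ {j' : Fin 2} {ℓ' : ℕ} {w' : M}, RW Msub EB 1 j' ℓ' w' →
      τ (m * w') = 0 := by
    intro m hm j' ℓ' w' hw'
    have hm0 : EB (m - EB m) = 0 := by rw [map_sub, hEBfix _ (hEBran m), sub_self]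
    have hmm : m - EB m ∈ Msub 0 := sub_mem hm (hBM 0 (hEBran m))
    have e : m * w' = EB m * w' + (m - EB m) * w' := by
      rw [← add_mul]
      congr 1
      abel
    have hww : RW Msub EB 0 j' (ℓ' + 1) ((m - EB m) * w') :=
      .cons hmm hm0 (by decide) hw'
    rw [e, map_add, tauB _ (hEBran m) hw', tauW hww, add_zero]
  rcases fin2cases i with hi | hi
  · have h2 : 2 ≤ ℓ := by
      rcases hcond with h | h
      · exact h
      · rw [hi] at h; exact absurd h (by decide)
    subst hi
    cases hw with
    | single hx hx0 => omega
    | @cons _ i' _ ℓ' x w' hx hx0 hij hw' =>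
      have hi' : i' = 1 := by
        rcases fin2cases i' with h0 | h1
        · exact absurd h0.symm (by simpa using hij)
        · exact h1
      subst hi'
      rw [← mul_assoc]
      exact split (a * x) (mul_mem ha hx) hw'
  · subst hi
    exact split a ha hw

lemma EM1_word (hτfaith : ∀ x : M, τ (star x * x) = 0 → x = 0)
    {EM₁ : M →ₗ[ℂ] M}
    (hEM₁ran : ∀ x : M, EM₁ x ∈ Msub 0)
    (hEM₁bimod : ∀ a ∈ Msub 0, ∀ x : M, ∀ a' ∈ Msub 0, EM₁ (a * x * a') = a * EM₁ x * a')
    (hEM₁tr : ∀ x : M, τ (EM₁ x) = τ x)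
    {i j : Fin 2} {ℓ : ℕ} {w : M} (hw : RW Msub EB i j ℓ w) (h2 : 2 ≤ ℓ) :
    EM₁ w = 0 := by
  have key : τ (star (EM₁ w) * w) = 0 :=
    tau_mul_word τ hfree hBM hEBl hEBran hEBfix hEBtr
      (star_mem (hEM₁ran w)) hw (Or.inl h2)
  have e := hEM₁bimod (star (EM₁ w)) (star_mem (hEM₁ran w)) w 1 (one_mem _)
  rw [mul_one, mul_one] at e
  have h1 : τ (star (EM₁ w) * EM₁ w) = τ (star (EM₁ w) * w) := by
    rw [← e, hEM₁tr]
  exact hτfaith _ (h1.trans key)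

lemma EM1_span (hτfaith : ∀ x : M, τ (star x * x) = 0 → x = 0)
    {EM₁ : M →ₗ[ℂ] M}
    (hEM₁ran : ∀ x : M, EM₁ x ∈ Msub 0)
    (hEM₁bimod : ∀ a ∈ Msub 0, ∀ x : M, ∀ a' ∈ Msub 0, EM₁ (a * x * a') = a * EM₁ x * a')
    (hEM₁tr : ∀ x : M, τ (EM₁ x) = τ x)
    {z : M} (hz : z ∈ Submodule.span ℂ (WGE Msub EB 2)) : EM₁ z = 0 := by
  refine Submodule.span_induction ?_ ?_ ?_ ?_ hz
  · rintro w ⟨i, j, ℓ, hl, hw⟩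
    exact EM1_word τ hfree hBM hEBl hEBran hEBfix hEBtr hτfaith hEM₁ran hEM₁bimod hEM₁tr hw hl
  · exact map_zero _
  · intro a b _ _ ha hb
    rw [map_add, ha, hb, add_zero]
  · intro r a _ ha
    rw [map_smul, ha, smul_zero]

end Expectations

section Core

lemma star_span_WF (hEBstar : ∀ x : M, EB (star x) = star (EB x)) {i : Fin 2} {m : ℕ}
    {z : M} (hz : z ∈ Submodule.span ℂ (WF Msub EB i m)) :
    star z ∈ Submodule.span ℂ (WGE Msub EB m) := by
  refine Submodule.span_induction ?_ ?_ ?_ ?_ hz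
  · rintro w ⟨j, ℓ, hl, hw⟩
    exact Submodule.subset_span ⟨j, i, ℓ, hl, hw.star_rw hEBstar⟩
  · rw [star_zero]; exact Submodule.zero_mem _
  · intro a b _ _ ha hb
    rw [star_add]; exact Submodule.add_mem _ ha hb
  · intro r a _ ha
    rw [star_smul]; exact Submodule.smul_mem _ _ ha

lemma pow_word {u₁ u₂ : M} (hu₁ : u₁ ∈ Msub 0) (h10 : EB u₁ = 0)
    (hu₂ : u₂ ∈ Msub 1) (h20 : EB u₂ = 0) :
    ∀ n : ℕ, 1 ≤ n → RW Msub EB 0 1 (2 * n) ((u₁ * u₂) ^ n) := by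
  intro n
  induction n with
  | zero => omega
  | succ n ih =>
    intro _
    by_cases hn : 1 ≤ n
    · have h := ih hn
      have e : (u₁ * u₂) ^ (n + 1) = u₁ * (u₂ * (u₁ * u₂) ^ n) := by
        rw [pow_succ', mul_assoc]
      have h1 : RW Msub EB 1 1 (2 * n + 1) (u₂ * (u₁ * u₂) ^ n) :=
        .cons hu₂ h20 (by decide) h
      have h2 : RW Msub EB 0 1 (2 * n + 1 + 1) ((u₁ * u₂) ^ (n + 1)) := by
        rw [e]; exact .cons hu₁ h10 (by decide) h1
      have e2 : 2 * (n + 1) = 2 * n + 1 + 1 := by ring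
      rw [e2]; exact h2
    · have hn0 : n = 0 := by omega
      subst hn0
      have e : (u₁ * u₂) ^ (0 + 1) = u₁ * u₂ := by norm_num
      have e2 : 2 * (0 + 1) = 1 + 1 := by norm_num
      rw [e, e2]
      exact .cons hu₁ h10 (by decide) (.single hu₂ h20)

variable (hBM : ∀ i, B ≤ Msub i)
  (hEBl : ∀ b ∈ B, ∀ x : M, EB (b * x) = b * EB x)
  (hEBr : ∀ x : M, ∀ b ∈ B, EB (x * b) = EB x * b)
  (hEBran : ∀ x : M, EB x ∈ B) (hEBfix : ∀ b ∈ B, EB b = b)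
  (hEBstar : ∀ x : M, EB (star x) = star (EB x))

include hBM hEBl hEBr hEBran hEBfix hEBstar

lemma core_mem {u₁ u₂ : M} (hu₁ : u₁ ∈ Msub 0) (h10 : EB u₁ = 0)
    (hu₂ : u₂ ∈ Msub 1) (h20 : EB u₂ = 0)
    {g h : M} {a c : ℕ}
    (hg : (a = 0 ∧ g ∈ B) ∨ ∃ i j, RW Msub EB i j a g)
    (hh : (c = 0 ∧ h ∈ B) ∨ ∃ i j, RW Msub EB i j c h)
    {n : ℕ} (hn : a + c + 2 ≤ 2 * n) (hn1 : 1 ≤ n) :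
    g * (u₁ * u₂) ^ n * h ∈ Submodule.span ℂ (WGE Msub EB 2) := by
  have huw := pow_word hu₁ h10 hu₂ h20 n hn1
  have step1 : g * (u₁ * u₂) ^ n ∈ Submodule.span ℂ (WGE Msub EB (2 * n - a)) := by
    rcases hg with ⟨ha, hgB⟩ | ⟨i, j, hgw⟩
    · subst ha
      exact Submodule.subset_span ⟨0, 1, 2 * n, by omega, huw.bmul hBM hEBl hgB⟩
    · have hq : RW Msub EB 1 0 (2 * n) (star ((u₁ * u₂) ^ n)) := huw.star_rw hEBstar
      have hsg : RW Msub EB j i a (star g) := hgw.star_rw hEBstar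
      have h1 : star ((u₁ * u₂) ^ n) * star g
          ∈ Submodule.span ℂ (WF Msub EB 1 (2 * n - a)) :=
        RW.mul_word hBM hEBl hEBr hEBran hEBfix hsg hq (by
          have := hgw.one_le
          omega)
      have h2 := star_span_WF hEBstar h1
      rw [star_mul, star_star, star_star] at h2
      exact h2
  have hge2 : ∀ {m : ℕ}, 2 * n - a ≤ m → WGE Msub EB m ⊆ WGE Msub EB 2 := by
    intro m hm w ⟨i, j, ℓ, hl, hw⟩
    exact ⟨i, j, ℓ, by omega, hw⟩
  rcases hh with ⟨hc, hhB⟩ | ⟨p, q, hhw⟩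
  · refine Submodule.span_induction
      (p := fun z _ => z * h ∈ Submodule.span ℂ (WGE Msub EB 2)) ?_ ?_ ?_ ?_ step1
    · rintro z ⟨i, j, m, hm, hz⟩
      exact Submodule.subset_span ⟨i, j, m, by omega, hz.mulb hBM hEBr hhB⟩
    · show (0 : M) * h ∈ _
      rw [zero_mul]; exact Submodule.zero_mem _
    · intro z w _ _ hz hw
      show (z + w) * h ∈ _
      rw [add_mul]; exact Submodule.add_mem _ hz hw
    · intro r z _ hz
      show (r • z) * h ∈ _
      rw [smul_mul_assoc]; exact Submodule.smul_mem _ _ hz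
  · refine Submodule.span_induction
      (p := fun z _ => z * h ∈ Submodule.span ℂ (WGE Msub EB 2)) ?_ ?_ ?_ ?_ step1
    · rintro z ⟨i, j, m, hm, hz⟩
      have hc1 := hhw.one_le
      have hstep := RW.mul_word hBM hEBl hEBr hEBran hEBfix hhw hz (by omega)
      refine Submodule.span_le.mpr ?_ hstep
      intro w hw
      exact Submodule.subset_span
        (WF_subset_WGE (WF_mono (m := m - c) (m' := 2) (by omega) hw))
    · show (0 : M) * h ∈ _
      rw [zero_mul]; exact Submodule.zero_mem _
    · intro z w _ _ hz hw
      show (z + w) * h ∈ _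
      rw [add_mul]; exact Submodule.add_mem _ hz hw
    · intro r z _ hz
      show (r • z) * h ∈ _
      rw [smul_mul_assoc]; exact Submodule.smul_mem _ _ hz

end Core

section Unitary

lemma unit_mul_l {a b : M} (ha : star a * a = 1) (hb : star b * b = 1) :
    star (a * b) * (a * b) = 1 := by
  rw [star_mul]
  calc star b * star a * (a * b) = star b * (star a * a) * b := by noncomm_ring
    _ = 1 := by rw [ha, mul_one, hb]

lemma unit_mul_r {a b : M} (ha : a * star a = 1) (hb : b * star b = 1) :
    (a * b) * star (a * b) = 1 := by
  rw [star_mul]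
  calc a * b * (star b * star a) = a * (b * star b) * star a := by noncomm_ring
    _ = 1 := by rw [hb, mul_one, ha]

lemma pow_unit_l {a : M} (h : star a * a = 1) : ∀ n : ℕ, star (a ^ n) * a ^ n = 1
  | 0 => by rw [pow_zero, star_one, one_mul]
  | n + 1 => by rw [pow_succ']; exact unit_mul_l h (pow_unit_l h n)

lemma pow_unit_r {a : M} (h : a * star a = 1) : ∀ n : ℕ, a ^ n * star (a ^ n) = 1
  | 0 => by rw [pow_zero, star_one, one_mul]
  | n + 1 => by rw [pow_succ']; exact unit_mul_r h (pow_unit_r h n)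

variable (τ : M →ₗ[ℂ] ℂ)

lemma Nrm_unitary (hτ1 : τ 1 = 1) {a : M} (h : star a * a = 1) : Nrm τ a = 1 := by
  unfold Nrm
  rw [h, hτ1, Complex.one_re, Real.sqrt_one]

lemma Nrm_mul_unitary_right (hτtr : ∀ x y : M, τ (x * y) = τ (y * x))
    {a : M} (h : a * star a = 1) (z : M) : Nrm τ (z * a) = Nrm τ z := by
  unfold Nrm
  congr 2
  calc τ (star (z * a) * (z * a)) = τ (star a * ((star z * z) * a)) := by
        rw [star_mul]; noncomm_ring
    _ = τ (((star z * z) * a) * star a) := hτtr _ _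
    _ = τ (star z * z) := by rw [mul_assoc, h, mul_one]

lemma Nrm_mul_unitary_left {a : M} (h : star a * a = 1) (z : M) :
    Nrm τ (a * z) = Nrm τ z := by
  unfold Nrm
  congr 2
  rw [star_mul, mul_assoc, ← mul_assoc (star a) a z, h, one_mul]

lemma Nrm_neg (z : M) : Nrm τ (-z) = Nrm τ z := by
  unfold Nrm
  congr 2
  simp

end Unitary

end Stmt17




/-!
STATEMENT 17. Let `M = M₁ *_B M₂` be an amalgamated free product of tracial von Neumann
algebras over `B`, with `M₁` diffuse, and suppose there exist unitaries `u₁ ∈ M₁`, `u₂ ∈ M₂`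
with `E_B(u₁) = E_B(u₂) = 0`.  Then for all `x, y` in the (dense) span of `B` and the reduced
words, `E_{M₁}(x (u₁u₂)ⁿ y) = 0` for all sufficiently large `n`.  Consequently `u₁u₂` is not
unitarily conjugate in `M` to any unitary of `M₁`, and `M` contains two Haar unitaries that
are not unitarily conjugate.

The amalgamated free product structure is axiomatized: `Msub 0 = M₁`, `Msub 1 = M₂` are
`*`-subalgebras both containing `B`, `E_B` and `E_{M₁}` are the trace-preserving conditional
expectations onto `B` and `M₁`, alternating reduced words of `E_B`-kernel elements are killed
by `E_B` (freeness), and `B` together with the reduced words spans `M` densely in `‖·‖₂`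
(here the span is taken in the purely linear sense, and density is stated w.r.t. the tracial
2-norm).  Diffuseness of `M₁` is expressed by the existence of a Haar unitary in `M₁`. -/
theorem stmt17 {M : Type*} [Ring M] [Algebra ℂ M] [StarRing M] [StarModule ℂ M]
    (τ : M →ₗ[ℂ] ℂ)
    (hτ1 : τ 1 = 1) (hτtr : ∀ x y : M, τ (x * y) = τ (y * x))
    (hτpos : ∀ x : M, 0 ≤ (τ (star x * x)).re ∧ (τ (star x * x)).im = 0)
    (hτfaith : ∀ x : M, τ (star x * x) = 0 → x = 0)
    (B : StarSubalgebra ℂ M) (Msub : Fin 2 → StarSubalgebra ℂ M)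
    (hBM : ∀ i, B ≤ Msub i)
    -- the conditional expectations onto `B` and onto `M₁ = Msub 0`
    (EB EM₁ : M →ₗ[ℂ] M)
    (hEBran : ∀ x : M, EB x ∈ B) (hEBfix : ∀ b ∈ B, EB b = b)
    (hEBbimod : ∀ b ∈ B, ∀ x : M, ∀ b' ∈ B, EB (b * x * b') = b * EB x * b')
    (hEBtr : ∀ x : M, τ (EB x) = τ x)
    (hEM₁ran : ∀ x : M, EM₁ x ∈ Msub 0) (hEM₁fix : ∀ a ∈ Msub 0, EM₁ a = a)
    (hEM₁bimod : ∀ a ∈ Msub 0, ∀ x : M, ∀ a' ∈ Msub 0, EM₁ (a * x * a') = a * EM₁ x * a')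
    (hEM₁tr : ∀ x : M, τ (EM₁ x) = τ x)
    -- freeness with amalgamation over `B`
    (hfree : ∀ (k : ℕ) (x : Fin (k + 1) → M) (idx : Fin (k + 1) → Fin 2),
      (∀ j, x j ∈ Msub (idx j)) → (∀ j, EB (x j) = 0) →
      (∀ j : Fin k, idx j.castSucc ≠ idx j.succ) →
      EB (List.ofFn x).prod = 0)
    -- `B` and the reduced words span `M` densely in 2-norm
    (hdense : ∀ z : M, ∀ ε : ℝ, 0 < ε →
      ∃ y ∈ Submodule.span ℂ ((B : Set M) ∪
          {w : M | ∃ (k : ℕ) (x : Fin (k + 1) → M) (idx : Fin (k + 1) → Fin 2),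
            (∀ j, x j ∈ Msub (idx j)) ∧ (∀ j, EB (x j) = 0) ∧
            (∀ j : Fin k, idx j.castSucc ≠ idx j.succ) ∧ w = (List.ofFn x).prod}),
        Real.sqrt (τ (star (z - y) * (z - y))).re < ε)
    -- `M₁` is diffuse: it contains a Haar unitary
    (hdiffuse : ∃ v ∈ Msub 0, star v * v = 1 ∧ v * star v = 1 ∧
      ∀ n : ℕ, n ≠ 0 → τ (v ^ n) = 0 ∧ τ (star v ^ n) = 0)
    -- unitaries `u₁ ∈ M₁`, `u₂ ∈ M₂` with `E_B(u₁) = E_B(u₂) = 0`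
    (u₁ u₂ : M) (hu₁ : u₁ ∈ Msub 0) (hu₂ : u₂ ∈ Msub 1)
    (hu₁U : star u₁ * u₁ = 1 ∧ u₁ * star u₁ = 1)
    (hu₂U : star u₂ * u₂ = 1 ∧ u₂ * star u₂ = 1)
    (hEBu : EB u₁ = 0 ∧ EB u₂ = 0) :
    -- (1) `E_{M₁}(x (u₁u₂)ⁿ y) = 0` eventually, on the dense span
    (∀ x ∈ Submodule.span ℂ ((B : Set M) ∪
        {w : M | ∃ (k : ℕ) (x' : Fin (k + 1) → M) (idx : Fin (k + 1) → Fin 2),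
          (∀ j, x' j ∈ Msub (idx j)) ∧ (∀ j, EB (x' j) = 0) ∧
          (∀ j : Fin k, idx j.castSucc ≠ idx j.succ) ∧ w = (List.ofFn x').prod}),
      ∀ y ∈ Submodule.span ℂ ((B : Set M) ∪
        {w : M | ∃ (k : ℕ) (x' : Fin (k + 1) → M) (idx : Fin (k + 1) → Fin 2),
          (∀ j, x' j ∈ Msub (idx j)) ∧ (∀ j, EB (x' j) = 0) ∧
          (∀ j : Fin k, idx j.castSucc ≠ idx j.succ) ∧ w = (List.ofFn x').prod}),
      ∃ N : ℕ, ∀ n : ℕ, N ≤ n → EM₁ (x * (u₁ * u₂) ^ n * y) = 0) ∧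
    -- (2) `u₁u₂` is not unitarily conjugate to any element of `M₁`
    (∀ v : M, star v * v = 1 → v * star v = 1 → v * (u₁ * u₂) * star v ∉ Msub 0) ∧
    -- (3) `M` contains two Haar unitaries that are not unitarily conjugate
    (∃ w₁ w₂ : M,
      (star w₁ * w₁ = 1 ∧ w₁ * star w₁ = 1 ∧
        ∀ n : ℕ, n ≠ 0 → τ (w₁ ^ n) = 0 ∧ τ (star w₁ ^ n) = 0) ∧
      (star w₂ * w₂ = 1 ∧ w₂ * star w₂ = 1 ∧
        ∀ n : ℕ, n ≠ 0 → τ (w₂ ^ n) = 0 ∧ τ (star w₂ ^ n) = 0) ∧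
      ¬ ∃ v : M, star v * v = 1 ∧ v * star v = 1 ∧ v * w₁ * star v = w₂) := by
  classical
  obtain ⟨hu11, hu12⟩ := hu₁U
  obtain ⟨hu21, hu22⟩ := hu₂U
  obtain ⟨hEBu1, hEBu2⟩ := hEBu
  have hEBl : ∀ b ∈ B, ∀ x : M, EB (b * x) = b * EB x := by
    intro b hb x
    have h := hEBbimod b hb x 1 (one_mem B)
    rwa [mul_one, mul_one] at h
  have hEBr : ∀ x : M, ∀ b ∈ B, EB (x * b) = EB x * b := by
    intro x b hb
    have h := hEBbimod 1 (one_mem B) x b hb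
    rwa [one_mul, one_mul] at h
  have hEBstar : ∀ z : M, EB (star z) = star (EB z) := fun z =>
    Stmt17.EB_star τ hτpos hτfaith hEBran hEBl hEBr hEBtr z
  set WS : Set M := {w : M | ∃ (k : ℕ) (x' : Fin (k + 1) → M) (idx : Fin (k + 1) → Fin 2),
      (∀ j, x' j ∈ Msub (idx j)) ∧ (∀ j, EB (x' j) = 0) ∧
      (∀ j : Fin k, idx j.castSucc ≠ idx j.succ) ∧ w = (List.ofFn x').prod} with hWS
  have hgen : ∀ z ∈ ((B : Set M) ∪ WS), ∃ a : ℕ,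
      (a = 0 ∧ z ∈ B) ∨ ∃ i j, Stmt17.RW Msub EB i j a z := by
    rintro z (hzB | ⟨k, x', idx, c1, c2, c3, rfl⟩)
    · exact ⟨0, Or.inl ⟨rfl, hzB⟩⟩
    · obtain ⟨j, hj⟩ := Stmt17.rw_of_rep k x' idx c1 c2 c3
      exact ⟨k + 1, Or.inr ⟨idx 0, j, hj⟩⟩
  have part1 : ∀ x ∈ Submodule.span ℂ ((B : Set M) ∪ WS),
      ∀ y ∈ Submodule.span ℂ ((B : Set M) ∪ WS),
      ∃ N : ℕ, ∀ n : ℕ, N ≤ n → EM₁ (x * (u₁ * u₂) ^ n * y) = 0 := by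
    intro x hx
    refine Submodule.span_induction (p := fun g _ =>
      ∀ y ∈ Submodule.span ℂ ((B : Set M) ∪ WS),
        ∃ N : ℕ, ∀ n : ℕ, N ≤ n → EM₁ (g * (u₁ * u₂) ^ n * y) = 0) ?_ ?_ ?_ ?_ hx
    · intro g hgS y hy
      refine Submodule.span_induction (p := fun h _ =>
        ∃ N : ℕ, ∀ n : ℕ, N ≤ n → EM₁ (g * (u₁ * u₂) ^ n * h) = 0) ?_ ?_ ?_ ?_ hy
      · intro h hhS
        obtain ⟨a, hga⟩ := hgen g hgS
        obtain ⟨c, hhc⟩ := hgen h hhS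
        refine ⟨a + c + 2, fun n hn => ?_⟩
        have hm := Stmt17.core_mem hBM hEBl hEBr hEBran hEBfix hEBstar
          hu₁ hEBu1 hu₂ hEBu2 hga hhc (n := n) (by omega) (by omega)
        exact Stmt17.EM1_span τ hfree hBM hEBl hEBran hEBfix hEBtr hτfaith
          hEM₁ran hEM₁bimod hEM₁tr hm
      · exact ⟨0, fun n _ => by rw [mul_zero, map_zero]⟩
      · rintro y₁ y₂ _ _ ⟨N₁, h₁⟩ ⟨N₂, h₂⟩
        exact ⟨max N₁ N₂, fun n hn => by
          rw [mul_add, map_add, h₁ n (le_trans (le_max_left _ _) hn),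
            h₂ n (le_trans (le_max_right _ _) hn), add_zero]⟩
      · rintro r y₁ _ ⟨N₁, h₁⟩
        exact ⟨N₁, fun n hn => by rw [mul_smul_comm, map_smul, h₁ n hn, smul_zero]⟩
    · intro y _
      exact ⟨0, fun n _ => by rw [zero_mul, zero_mul, map_zero]⟩
    · intro x₁ x₂ _ _ h₁ h₂ y hy
      obtain ⟨N₁, hh₁⟩ := h₁ y hy
      obtain ⟨N₂, hh₂⟩ := h₂ y hy
      exact ⟨max N₁ N₂, fun n hn => by
        rw [add_mul, add_mul, map_add, hh₁ n (le_trans (le_max_left _ _) hn),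
          hh₂ n (le_trans (le_max_right _ _) hn), add_zero]⟩
    · intro r x₁ _ h₁ y hy
      obtain ⟨N₁, hh₁⟩ := h₁ y hy
      exact ⟨N₁, fun n hn => by
        rw [smul_mul_assoc, smul_mul_assoc, map_smul, hh₁ n hn, smul_zero]⟩
  have starSpan : ∀ z ∈ Submodule.span ℂ ((B : Set M) ∪ WS),
      star z ∈ Submodule.span ℂ ((B : Set M) ∪ WS) := by
    intro z hz
    refine Submodule.span_induction ?_ ?_ ?_ ?_ hz
    · rintro m (hmB | ⟨k, x', idx, c1, c2, c3, rfl⟩)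
      · exact Submodule.subset_span (Or.inl (star_mem hmB))
      · obtain ⟨j, hj⟩ := Stmt17.rw_of_rep k x' idx c1 c2 c3
        obtain ⟨k2, x2, idx2, d1, d2, d3, d4, _, _⟩ := (hj.star_rw hEBstar).exists_rep
        rw [d4]
        exact Submodule.subset_span (Or.inr ⟨k2, x2, idx2, d1, d2, d3, rfl⟩)
    · rw [star_zero]; exact Submodule.zero_mem _
    · intro a b _ _ ha hb
      rw [star_add]; exact Submodule.add_mem _ ha hb
    · intro r a _ ha
      rw [star_smul]; exact Submodule.smul_mem _ _ ha
  have part2 : ∀ v : M, star v * v = 1 → v * star v = 1 →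
      v * (u₁ * u₂) * star v ∉ Msub 0 := by
    intro v hv1 hv2 hmem
    have huL : star (u₁ * u₂) * (u₁ * u₂) = 1 := Stmt17.unit_mul_l hu11 hu21
    have huR : (u₁ * u₂) * star (u₁ * u₂) = 1 := Stmt17.unit_mul_r hu12 hu22
    set w := v * (u₁ * u₂) * star v with hwdef
    have hsv1 : star (star v) * star v = 1 := by rw [star_star]; exact hv2
    have hsv2 : star v * star (star v) = 1 := by rw [star_star]; exact hv1
    have hwL : star w * w = 1 := Stmt17.unit_mul_l (Stmt17.unit_mul_l hv1 huL) hsv1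
    have hwR : w * star w = 1 := Stmt17.unit_mul_r (Stmt17.unit_mul_r hv2 huR) hsv2
    have hwn : ∀ n : ℕ, w ^ n = v * (u₁ * u₂) ^ n * star v := by
      intro n
      induction n with
      | zero => rw [pow_zero, pow_zero, mul_one]; exact hv2.symm
      | succ n ih =>
        rw [pow_succ' w n, ih, pow_succ' (u₁ * u₂) n, hwdef]
        calc v * (u₁ * u₂) * star v * (v * (u₁ * u₂) ^ n * star v)
            = v * (u₁ * u₂) * (star v * v) * ((u₁ * u₂) ^ n * star v) := by noncomm_ring
          _ = v * ((u₁ * u₂) * (u₁ * u₂) ^ n) * star v := by rw [hv1, mul_one]; noncomm_ring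
    have hT : ∀ n : ℕ, τ (star (w ^ n) * (v * (u₁ * u₂) ^ n * star v)) = 1 := by
      intro n
      rw [← hwn n, Stmt17.pow_unit_l hwL n, hτ1]
    obtain ⟨y, hyS, hyN⟩ := hdense v (1/4) (by norm_num)
    have hNvy : Stmt17.Nrm τ (v - y) < 1/4 := hyN
    obtain ⟨N, hN⟩ := part1 y hyS (star y) (starSpan y hyS)
    have hwNu : Stmt17.Nrm τ (w ^ N) = 1 :=
      Stmt17.Nrm_unitary τ hτ1 (Stmt17.pow_unit_l hwL N)
    have hA : ‖τ (star (w ^ N) * ((v - y) * ((u₁ * u₂) ^ N * star v)))‖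
        ≤ Stmt17.Nrm τ (v - y) := by
      have h := Stmt17.cs τ hτpos (w ^ N) ((v - y) * ((u₁ * u₂) ^ N * star v))
      rw [hwNu, one_mul] at h
      have hr : Stmt17.Nrm τ ((v - y) * ((u₁ * u₂) ^ N * star v)) = Stmt17.Nrm τ (v - y) :=
        Stmt17.Nrm_mul_unitary_right τ hτtr
          (Stmt17.unit_mul_r (Stmt17.pow_unit_r huR N) hsv2) _
      rwa [hr] at h
    have hB : ‖τ ((star (w ^ N) * (y * (u₁ * u₂) ^ N)) * star (v - y))‖
        ≤ Stmt17.Nrm τ (v - y) * Stmt17.Nrm τ y := by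
      have hflip : τ ((star (w ^ N) * (y * (u₁ * u₂) ^ N)) * star (v - y))
          = τ (star (v - y) * (star (w ^ N) * (y * (u₁ * u₂) ^ N))) := hτtr _ _
      rw [hflip]
      have h := Stmt17.cs τ hτpos (v - y) (star (w ^ N) * (y * (u₁ * u₂) ^ N))
      have h1 : Stmt17.Nrm τ (star (w ^ N) * (y * (u₁ * u₂) ^ N))
          = Stmt17.Nrm τ (y * (u₁ * u₂) ^ N) :=
        Stmt17.Nrm_mul_unitary_left τ (by rw [star_star]; exact Stmt17.pow_unit_r hwR N) _
      have h2 : Stmt17.Nrm τ (y * (u₁ * u₂) ^ N) = Stmt17.Nrm τ y :=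
        Stmt17.Nrm_mul_unitary_right τ hτtr (Stmt17.pow_unit_r huR N) _
      rw [h1, h2] at h
      exact h
    have hbim := hEM₁bimod (star (w ^ N)) (star_mem (pow_mem hmem N))
      (y * (u₁ * u₂) ^ N * star y) 1 (one_mem _)
    rw [mul_one, mul_one] at hbim
    have hCn : τ (star (w ^ N) * (y * (u₁ * u₂) ^ N * star y)) = 0 := by
      rw [← hEM₁tr (star (w ^ N) * (y * (u₁ * u₂) ^ N * star y)), hbim,
        hN N le_rfl, mul_zero, map_zero]
    have htri : (1 : ℝ) ≤ ‖τ (star (w ^ N) * (y * (u₁ * u₂) ^ N * star y))‖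
        + ‖τ ((star (w ^ N) * (y * (u₁ * u₂) ^ N)) * star (v - y))‖
        + ‖τ (star (w ^ N) * ((v - y) * ((u₁ * u₂) ^ N * star v)))‖ := by
      have e1 : star (w ^ N) * (v * (u₁ * u₂) ^ N * star v)
          = star (w ^ N) * (y * (u₁ * u₂) ^ N * star y)
            + (star (w ^ N) * (y * (u₁ * u₂) ^ N)) * star (v - y)
            + star (w ^ N) * ((v - y) * ((u₁ * u₂) ^ N * star v)) := by
        rw [star_sub]; noncomm_ring
      calc (1 : ℝ) = ‖τ (star (w ^ N) * (v * (u₁ * u₂) ^ N * star v))‖ := by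
            rw [hT N]; exact norm_one.symm
        _ = ‖τ (star (w ^ N) * (y * (u₁ * u₂) ^ N * star y))
            + τ ((star (w ^ N) * (y * (u₁ * u₂) ^ N)) * star (v - y))
            + τ (star (w ^ N) * ((v - y) * ((u₁ * u₂) ^ N * star v)))‖ := by
            rw [e1, map_add, map_add]
        _ ≤ _ := norm_add₃_le
    have hy' : Stmt17.Nrm τ y ≤ 1 + Stmt17.Nrm τ (v - y) := by
      have e : y = v + -(v - y) := by abel
      calc Stmt17.Nrm τ y = Stmt17.Nrm τ (v + -(v - y)) := by rw [← e]
        _ ≤ Stmt17.Nrm τ v + Stmt17.Nrm τ (-(v - y)) := Stmt17.Nrm_add τ hτpos v _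
        _ = 1 + Stmt17.Nrm τ (v - y) := by
            rw [Stmt17.Nrm_unitary τ hτ1 hv1, Stmt17.Nrm_neg]
    rw [hCn, norm_zero] at htri
    nlinarith [Stmt17.Nrm_nonneg τ (v - y), Stmt17.Nrm_nonneg τ y, hNvy, hy', hA, hB, htri]
  refine ⟨part1, part2, ?_⟩
  obtain ⟨v₀, hv₀mem, hv₀1, hv₀2, hv₀haar⟩ := hdiffuse
  refine ⟨u₁ * u₂, v₀,
    ⟨Stmt17.unit_mul_l hu11 hu21, Stmt17.unit_mul_r hu12 hu22, ?_⟩,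
    ⟨hv₀1, hv₀2, hv₀haar⟩, ?_⟩
  · intro n hn
    have hw := Stmt17.pow_word hu₁ hEBu1 hu₂ hEBu2 n (by omega)
    have h1 : τ ((u₁ * u₂) ^ n) = 0 := by
      rw [← hEBtr, hw.eb_zero hfree, map_zero]
    refine ⟨h1, ?_⟩
    rw [← star_pow, Stmt17.tau_star τ hτpos, h1, map_zero]
  · rintro ⟨v, hv1, hv2, heq⟩
    have h := part2 v hv1 hv2
    rw [heq] at h
    exact h hv₀mem
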